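/- Let M = (m_{ij}) be an n×n complex matrix (n ≥ 1) that is strictly row diagonally dominant, i.e., |m_{ii}| > Σ_{j≠i} |m_{ij}| for every i. Let D = diag(m_{11},…,m_{nn}) and ρ = ρ(D⁻¹(M − D)). Then ρ ≤ max_i Σ_{j≠i} |m_{ij}/m_{ii}| < 1, and with c = −n·ln(1 − ρ) the relative error bound |det(M) − Π_{i=1}^n m_{ii}| / |Π_{i=1}^n m_{ii}| ≤ c ρ · e^{c ρ} holds. If in addition c ρ < 1, then |det(M) − Π_{i=1}^n m_{ii}| / |Π_{i=1}^n m_{ii}| ≤ (7/4) c ρ. -/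

import Mathlib

open Matrix

/-- The sum `Σ_{j ≠ i} |m_{ij} / m_{ii}|` of scaled off-diagonal moduli in row `i`. -/
noncomputable def rowRatioSum {n : ℕ} (M : Matrix (Fin n) (Fin n) ℂ) (i : Fin n) : ℝ :=
  ∑ j ∈ Finset.univ.erase i, ‖M i j / M i i‖

open Polynomial in
private lemma aux_exp_multiset_sum (s : Multiset ℂ) :
    (s.map Complex.exp).prod = Complex.exp s.sum := by
  induction s using Multiset.induction_on with
  | empty => simp
  | cons a s ih => simp [Complex.exp_add, ih, mul_comm]

private lemma aux_exp_sub_one_le (x : ℝ) : Real.exp x - 1 ≤ x * Real.exp x := by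
  have h1 : (1 - x) * Real.exp x ≤ Real.exp (-x) * Real.exp x := by
    apply mul_le_mul_of_nonneg_right _ (Real.exp_pos x).le
    linarith [Real.add_one_le_exp (-x)]
  have h2 : Real.exp (-x) * Real.exp x = 1 := by
    rw [← Real.exp_add]; simp
  nlinarith

private lemma aux_exp_convex {x : ℝ} (h0 : 0 ≤ x) (h1 : x ≤ 1) :
    Real.exp x - 1 ≤ (Real.exp 1 - 1) * x := by
  have := convexOn_exp.2 (Set.mem_univ (0:ℝ)) (Set.mem_univ (1:ℝ))
    (show (0:ℝ) ≤ 1 - x by linarith) h0 (by ring)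
  simp only [smul_eq_mul, mul_zero, mul_one, zero_add, Real.exp_zero] at this
  nlinarith

private lemma aux_norm_exp_sub_one (z : ℂ) : ‖Complex.exp z - 1‖ ≤ Real.exp ‖z‖ - 1 := by
  have hf : ∀ t : ℝ, HasDerivAt (fun t : ℝ => Complex.exp (t * z))
      (Complex.exp (t * z) * z) t := by
    intro t
    have h1 : HasDerivAt (fun t : ℝ => ((t : ℂ) * z)) ((1:ℝ) * z) t :=
      ((hasDerivAt_id t).ofReal_comp).mul_const z
    simpa using h1.cexp
  have hint : (∫ t in (0:ℝ)..1, Complex.exp (t * z) * z) = Complex.exp z - 1 := by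
    rw [intervalIntegral.integral_eq_sub_of_hasDerivAt (fun t _ => hf t)
      (Continuous.intervalIntegrable (by continuity) _ _)]
    simp
  have hg : ∀ t : ℝ, HasDerivAt (fun t : ℝ => Real.exp (t * ‖z‖))
      (Real.exp (t * ‖z‖) * ‖z‖) t := by
    intro t
    simpa using ((hasDerivAt_id t).mul_const ‖z‖).exp
  have hgint : (∫ t in (0:ℝ)..1, Real.exp (t * ‖z‖) * ‖z‖) = Real.exp ‖z‖ - 1 := by
    rw [intervalIntegral.integral_eq_sub_of_hasDerivAt (fun t _ => hg t)
      (Continuous.intervalIntegrable (by continuity) _ _)]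
    simp
  calc ‖Complex.exp z - 1‖ = ‖∫ t in (0:ℝ)..1, Complex.exp (t * z) * z‖ := by rw [hint]
    _ ≤ |∫ t in (0:ℝ)..1, Real.exp (t * ‖z‖) * ‖z‖| := by
        apply intervalIntegral.norm_integral_le_abs_of_norm_le
        · filter_upwards [MeasureTheory.ae_restrict_mem measurableSet_uIoc] with t ht
          rw [Set.uIoc_of_le (by norm_num : (0:ℝ) ≤ 1)] at ht
          have ht0 : 0 ≤ t := ht.1.le
          rw [norm_mul, Complex.norm_exp]
          gcongr
          have : ((t:ℂ) * z).re = t * z.re := by simp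
          rw [this]
          exact mul_le_mul_of_nonneg_left (Complex.re_le_norm z) ht0
        · exact Continuous.intervalIntegrable (by continuity) _ _
    _ = Real.exp ‖z‖ - 1 := by
        rw [hgint, abs_of_nonneg]
        linarith [Real.one_le_exp (norm_nonneg z)]

private lemma aux_norm_log_sub (z : ℂ) (hz : ‖z‖ < 1) :
    ‖Complex.log (1 + z) - z‖ ≤ -Real.log (1 - ‖z‖) - ‖z‖ := by
  have hz0 : (0:ℝ) ≤ ‖z‖ := norm_nonneg z
  have hf : HasSum (fun n : ℕ => (-1) ^ (n + 1) * z ^ n / n - if n = 1 then z else 0)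
      (Complex.log (1 + z) - z) :=
    (Complex.hasSum_taylorSeries_log hz).sub (hasSum_ite_eq 1 z)
  have hgC : HasSum (fun n : ℕ => ((‖z‖:ℂ)) ^ n / n) (-Complex.log (1 - ‖z‖)) :=
    Complex.hasSum_taylorSeries_neg_log (by simpa [abs_of_nonneg hz0] using hz)
  have hgR : HasSum (fun n : ℕ => ‖z‖ ^ n / n) (-Real.log (1 - ‖z‖)) := by
    rw [← Complex.hasSum_ofReal]
    convert hgC using 2 with n
    · push_cast; ring
    · rw [Complex.ofReal_neg]
      congr 1
      rw [show (1 - (‖z‖:ℂ)) = ((1 - ‖z‖ : ℝ) : ℂ) by push_cast; ring]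
      exact Complex.ofReal_log (x := 1 - ‖z‖) (by linarith)
  have hg : HasSum (fun n : ℕ => ‖z‖ ^ n / n - if n = 1 then ‖z‖ else 0)
      (-Real.log (1 - ‖z‖) - ‖z‖) := hgR.sub (hasSum_ite_eq 1 ‖z‖)
  have hbound : ∀ n : ℕ, ‖(-1:ℂ) ^ (n + 1) * z ^ n / n - if n = 1 then z else 0‖ ≤
      ‖z‖ ^ n / n - if n = 1 then ‖z‖ else 0 := by
    intro n
    match n with
    | 0 => simp
    | 1 => simp
    | (m+2) =>
      simp only [if_neg (by omega : m + 2 ≠ 1), sub_zero]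
      rw [norm_div, norm_mul, norm_pow, norm_pow, norm_neg, norm_one, one_pow, one_mul]
      rw [Complex.norm_natCast]
  calc ‖Complex.log (1 + z) - z‖ ≤
      ∑' n : ℕ, ‖(-1:ℂ) ^ (n + 1) * z ^ n / n - if n = 1 then z else 0‖ := by
        rw [← hf.tsum_eq]
        exact norm_tsum_le_tsum_norm (hf.summable.norm)
    _ ≤ ∑' n : ℕ, (‖z‖ ^ n / n - if n = 1 then ‖z‖ else 0) :=
        Summable.tsum_le_tsum hbound (hf.summable.norm) hg.summable
    _ = -Real.log (1 - ‖z‖) - ‖z‖ := hg.tsum_eq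

private lemma aux_g_mono {x ρ : ℝ} (hx0 : 0 ≤ x) (hxρ : x ≤ ρ) (hρ : ρ < 1) :
    -Real.log (1 - x) - x ≤ -Real.log (1 - ρ) - ρ := by
  have hu : (0:ℝ) < 1 - x := by linarith
  have hv : (0:ℝ) < 1 - ρ := by linarith
  have h := Real.log_le_sub_one_of_pos (show (0:ℝ) < (1-ρ)/(1-x) by positivity)
  rw [Real.log_div hv.ne' hu.ne'] at h
  have hd : (1-ρ)/(1-x) - 1 = -(ρ - x)/(1-x) := by field_simp; ring
  rw [hd] at h
  have : -(ρ - x)/(1-x) ≤ -(ρ - x) := by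
    rw [neg_div, neg_le_neg_iff]
    rw [le_div_iff₀ hu]
    nlinarith
  linarith

private lemma aux_key {ρ : ℝ} (hρ0 : 0 ≤ ρ) (hρ : ρ < 1) :
    (1 - ρ) * (-Real.log (1 - ρ)) ≤ ρ := by
  have hv : (0:ℝ) < 1 - ρ := by linarith
  have h := Real.one_sub_inv_le_log_of_pos hv
  have h2 : (1 - ρ) * (1 - (1-ρ)⁻¹) ≤ (1 - ρ) * Real.log (1 - ρ) :=
    mul_le_mul_of_nonneg_left h hv.le
  have h3 : (1 - ρ) * (1 - (1-ρ)⁻¹) = (1 - ρ) - 1 := by field_simp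
  nlinarith

open Polynomial in
private lemma aux_charpoly_eval {n : ℕ} (A : Matrix (Fin n) (Fin n) ℂ) (μ : ℂ) :
    A.charpoly.eval μ = (Matrix.diagonal (fun _ : Fin n => μ) - A).det := by
  rw [Matrix.charpoly, ← coe_evalRingHom, RingHom.map_det]
  congr 1
  ext i j
  by_cases h : i = j
  · subst h; simp [charmatrix_apply_eq]
  · simp [charmatrix_apply_ne _ _ _ h, Matrix.diagonal_apply_ne _ h]

open Polynomial in
private lemma aux_hasEigenvalue {n : ℕ} (A : Matrix (Fin n) (Fin n) ℂ) {μ : ℂ}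
    (h : μ ∈ A.charpoly.roots) : Module.End.HasEigenvalue (Matrix.toLin' A) μ := by
  have hroot : A.charpoly.eval μ = 0 :=
    (Polynomial.mem_roots (A.charpoly_monic.ne_zero)).mp h
  rw [aux_charpoly_eval] at hroot
  have hdet : (A - Matrix.diagonal (fun _ : Fin n => μ)).det = 0 := by
    rw [show A - Matrix.diagonal (fun _ : Fin n => μ)
        = -(Matrix.diagonal (fun _ : Fin n => μ) - A) by rw [neg_sub], Matrix.det_neg, hroot,
        mul_zero]
  rw [Module.End.hasEigenvalue_iff, Module.End.eigenspace_def]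
  have hlin : Matrix.toLin' A - μ • 1 = Matrix.toLin' (A - Matrix.diagonal fun _ => μ) := by
    rw [map_sub]
    congr 1
    rw [show Matrix.diagonal (fun _ : Fin n => μ) = μ • (1 : Matrix (Fin n) (Fin n) ℂ) by
      rw [Matrix.smul_one_eq_diagonal], _root_.map_smul, Matrix.toLin'_one]
    rfl
  rw [hlin]
  have hld : LinearMap.det (Matrix.toLin' (A - Matrix.diagonal fun _ : Fin n => μ)) = 0 := by
    rw [LinearMap.det_toLin']; exact hdet
  exact (LinearMap.bot_lt_ker_of_det_eq_zero hld).ne'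

/-- **Corollary (strictly diagonally dominant matrices).**
If `M` is strictly row diagonally dominant, `D` is its diagonal part and
`ρ = ρ(D⁻¹(M - D))`, then `ρ ≤ max_i Σ_{j≠i} |m_{ij}/m_{ii}| < 1`, and with
`c = -n ln(1-ρ)` the relative error of the product of the diagonal entries as an
approximation of `det M` is at most `c ρ e^{c ρ}`; if moreover `c ρ < 1`, it is
at most `(7/4) c ρ`. -/
theorem stmt5 {n : ℕ} (hn : 1 ≤ n)
    (M : Matrix (Fin n) (Fin n) ℂ)
    (hdd : ∀ i : Fin n,
      ∑ j ∈ Finset.univ.erase i, ‖M i j‖ < ‖M i i‖)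
    (D A : Matrix (Fin n) (Fin n) ℂ)
    (hD : D = Matrix.diagonal (fun i => M i i)) (hA : A = D⁻¹ * (M - D))
    (ρ : ℝ)
    (hρub : ∀ μ ∈ A.charpoly.roots, ‖μ‖ ≤ ρ)
    (hρmax : ∃ μ ∈ A.charpoly.roots, ‖μ‖ = ρ)
    (c : ℝ) (hc : c = -(n : ℝ) * Real.log (1 - ρ)) :
    (∃ i : Fin n, (∀ i' : Fin n, rowRatioSum M i' ≤ rowRatioSum M i) ∧
        ρ ≤ rowRatioSum M i ∧ rowRatioSum M i < 1) ∧
      ‖M.det - ∏ i, M i i‖ / ‖∏ i, M i i‖ ≤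
        c * ρ * Real.exp (c * ρ) ∧
      (c * ρ < 1 →
        ‖M.det - ∏ i, M i i‖ / ‖∏ i, M i i‖ ≤
          7 / 4 * (c * ρ)) := by
  classical
  -- basic facts about the diagonal
  have habs : ∀ i, 0 < ‖M i i‖ := fun i =>
    lt_of_le_of_lt (Finset.sum_nonneg fun j _ => norm_nonneg _) (hdd i)
  have hMii : ∀ i, M i i ≠ 0 := fun i => by
    intro h0
    have := habs i
    rw [h0] at this
    simp at this
  -- inverse of D
  have hDinv : D⁻¹ = Matrix.diagonal (fun i => (M i i)⁻¹) := by
    apply Matrix.inv_eq_right_inv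
    rw [hD, Matrix.diagonal_mul_diagonal]
    rw [show (fun i => M i i * (M i i)⁻¹) = fun _ => (1:ℂ) by
      funext i; exact mul_inv_cancel₀ (hMii i)]
    exact Matrix.diagonal_one
  -- entries of A
  have hAentry : ∀ i j, A i j = (M i i)⁻¹ * (M i j - D i j) := by
    intro i j
    rw [hA, hDinv, Matrix.diagonal_mul, Matrix.sub_apply]
  have hAdiag : ∀ i, A i i = 0 := by
    intro i
    rw [hAentry, hD, Matrix.diagonal_apply_eq, sub_self, mul_zero]
  have hAoff : ∀ i j, j ≠ i → A i j = M i j / M i i := by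
    intro i j hji
    rw [hAentry, hD, Matrix.diagonal_apply_ne' _ hji, sub_zero, mul_comm, div_eq_mul_inv]
  have hrow : ∀ k, ∑ j ∈ Finset.univ.erase k, ‖A k j‖ = rowRatioSum M k := by
    intro k
    rw [rowRatioSum]
    refine Finset.sum_congr rfl fun j hj => ?_
    rw [hAoff k j (Finset.mem_erase.mp hj).1]
  -- part 1
  obtain ⟨i, -, hmax⟩ := Finset.exists_max_image Finset.univ (rowRatioSum M)
    ⟨⟨0, hn⟩, Finset.mem_univ _⟩
  have hlt1 : ∀ k, rowRatioSum M k < 1 := by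
    intro k
    rw [rowRatioSum]
    simp_rw [norm_div]
    rw [← Finset.sum_div, div_lt_one (habs k)]
    exact hdd k
  have hρle : ρ ≤ rowRatioSum M i := by
    obtain ⟨μ, hμR, hμabs⟩ := hρmax
    obtain ⟨k, hk⟩ := eigenvalue_mem_ball (aux_hasEigenvalue A hμR)
    rw [Metric.mem_closedBall, hAdiag k, dist_zero_right, hμabs, hrow] at hk
    exact hk.trans (hmax k (Finset.mem_univ k))
  have hρ1 : ρ < 1 := lt_of_le_of_lt hρle (hlt1 i)
  have hρ0 : 0 ≤ ρ := by
    obtain ⟨μ, -, hμabs⟩ := hρmax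
    rw [← hμabs]; exact norm_nonneg _
  refine ⟨⟨i, fun i' => hmax i' (Finset.mem_univ i'), hρle, hlt1 i⟩, ?_⟩
  -- determinant identities
  set P : ℂ := ∏ j, M j j with hP
  have hPne : P ≠ 0 := Finset.prod_ne_zero_iff.mpr fun j _ => hMii j
  have hdetD : D.det = P := by rw [hD, Matrix.det_diagonal]
  have hDD : D * D⁻¹ = 1 := by
    apply Matrix.mul_nonsing_inv
    rw [hdetD]
    exact isUnit_iff_ne_zero.mpr hPne
  have hM' : M = D * (1 + A) := by
    rw [hA, mul_add, mul_one, ← Matrix.mul_assoc, hDD, Matrix.one_mul]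
    rw [add_sub_cancel]
  -- roots of the characteristic polynomial
  set R : Multiset ℂ := A.charpoly.roots with hR
  have hsplits : A.charpoly.Splits := IsAlgClosed.splits A.charpoly
  have hcard : Multiset.card R = n := by
    rw [hR, (Polynomial.splits_iff_card_roots).mp hsplits, Matrix.charpoly_natDegree_eq_dim,
      Fintype.card_fin]
  have htr : R.sum = 0 := by
    rw [hR, ← Matrix.trace_eq_sum_roots_charpoly]
    rw [Matrix.trace]
    apply Finset.sum_eq_zero
    intro j _
    exact hAdiag j
  have hnorm : ∀ μ ∈ R, ‖μ‖ ≤ ρ := fun μ hμ => by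
    exact hρub μ hμ
  have h1μ : ∀ μ ∈ R, (1:ℂ) + μ ≠ 0 := by
    intro μ hμ h0
    have : μ = -1 := by linear_combination h0
    rw [this] at hμ
    have := hnorm _ hμ
    rw [norm_neg, norm_one] at this
    linarith
  -- det (1 + A) as a product over roots
  have hdet1A : (1 + A).det = (R.map (fun μ => 1 + μ)).prod := by
    have hfac := hsplits.eq_prod_roots_of_monic A.charpoly_monic
    have h1 : A.charpoly.eval (-1) = (-1:ℂ)^n * (1 + A).det := by
      rw [aux_charpoly_eval]
      rw [show Matrix.diagonal (fun _ : Fin n => (-1:ℂ)) - A = -(1 + A) by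
        rw [show Matrix.diagonal (fun _ : Fin n => (-1:ℂ))
            = -(1 : Matrix (Fin n) (Fin n) ℂ) by
          rw [← Matrix.diagonal_one, ← Matrix.diagonal_neg]]
        rw [neg_add, sub_eq_add_neg]]
      rw [Matrix.det_neg, Fintype.card_fin]
    have h2 : A.charpoly.eval (-1) = (-1:ℂ)^n * (R.map (fun μ => 1 + μ)).prod := by
      conv_lhs => rw [hfac]
      rw [Polynomial.eval_multiset_prod, Multiset.map_map]
      rw [show ((Polynomial.eval (-1:ℂ)) ∘ fun a => Polynomial.X - Polynomial.C a)
          = (Neg.neg ∘ fun a : ℂ => 1 + a) by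
        funext a
        simp only [Function.comp_apply, Polynomial.eval_sub, Polynomial.eval_X, Polynomial.eval_C]
        ring]
      rw [← Multiset.map_map, Multiset.prod_map_neg, Multiset.card_map, hcard]
    exact mul_left_cancel₀ (pow_ne_zero n (by norm_num : (-1:ℂ) ≠ 0)) (h1.symm.trans h2)
  -- the logarithm sum
  set L : ℂ := (R.map fun μ => Complex.log (1 + μ)).sum with hL
  have hexp : Complex.exp L = (R.map fun μ => 1 + μ).prod := by
    rw [hL, ← aux_exp_multiset_sum, Multiset.map_map]
    congr 1
    apply Multiset.map_congr rfl
    intro μ hμ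
    exact Complex.exp_log (h1μ μ hμ)
  have hLle : ‖L‖ ≤ c * ρ := by
    have hLsplit : L = (R.map fun μ => Complex.log (1 + μ) - μ).sum := by
      rw [hL]
      conv_lhs => rw [show (fun μ : ℂ => Complex.log (1 + μ))
        = (fun μ : ℂ => (Complex.log (1 + μ) - μ) + μ) by funext μ; ring]
      rw [Multiset.sum_map_add]
      rw [show (R.map fun μ : ℂ => μ) = R from Multiset.map_id' R, htr, add_zero]
    have hstep1 : ‖L‖ ≤ ((R.map fun μ => Complex.log (1 + μ) - μ).map norm).sum := by
      rw [hLsplit]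
      exact norm_multiset_sum_le _
    have hstep2 : ((R.map fun μ => Complex.log (1 + μ) - μ).map norm).sum ≤
        (Multiset.card ((R.map fun μ => Complex.log (1 + μ) - μ).map norm))
          • (-Real.log (1 - ρ) - ρ) := by
      apply Multiset.sum_le_card_nsmul
      intro x hx
      rw [Multiset.map_map] at hx
      obtain ⟨μ, hμR, rfl⟩ := Multiset.mem_map.mp hx
      calc ‖Complex.log (1 + μ) - μ‖ ≤ -Real.log (1 - ‖μ‖) - ‖μ‖ :=
            aux_norm_log_sub μ (lt_of_le_of_lt (hnorm μ hμR) hρ1)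
        _ ≤ -Real.log (1 - ρ) - ρ := aux_g_mono (norm_nonneg μ) (hnorm μ hμR) hρ1
    have hstep3 : (Multiset.card ((R.map fun μ => Complex.log (1 + μ) - μ).map norm))
        • (-Real.log (1 - ρ) - ρ) ≤ c * ρ := by
      rw [Multiset.card_map, Multiset.card_map, hcard, nsmul_eq_mul, hc]
      have hkey := aux_key hρ0 hρ1
      have hn0 : (0:ℝ) ≤ n := Nat.cast_nonneg n
      nlinarith
    calc ‖L‖ ≤ _ := hstep1
      _ ≤ _ := hstep2
      _ ≤ _ := hstep3
  have hcρ0 : 0 ≤ c * ρ := le_trans (norm_nonneg L) hLle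
  -- rewrite the relative error
  have hLHS : ‖M.det - ∏ j, M j j‖ / ‖∏ j, M j j‖
      = ‖Complex.exp L - 1‖ := by
    have hdetM : M.det = P * Complex.exp L := by
      conv_lhs => rw [hM']
      rw [Matrix.det_mul, hdetD, hdet1A, hexp]
    rw [← hP, hdetM,
      show P * Complex.exp L - P = P * (Complex.exp L - 1) by ring,
      norm_mul, mul_comm, mul_div_assoc, div_self (norm_ne_zero_iff.mpr hPne), mul_one]
  rw [hLHS]
  have hbase : ‖Complex.exp L - 1‖ ≤ Real.exp ‖L‖ - 1 := by
    exact aux_norm_exp_sub_one L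
  constructor
  · calc ‖Complex.exp L - 1‖ ≤ Real.exp ‖L‖ - 1 := hbase
      _ ≤ ‖L‖ * Real.exp ‖L‖ := aux_exp_sub_one_le ‖L‖
      _ ≤ (c * ρ) * Real.exp (c * ρ) :=
          mul_le_mul hLle (Real.exp_le_exp.mpr hLle) (Real.exp_pos _).le hcρ0
  · intro hcρ1
    have hL1 : ‖L‖ ≤ 1 := hLle.trans hcρ1.le
    have he : Real.exp 1 - 1 ≤ 7/4 := by
      have := Real.exp_one_lt_d9
      linarith
    calc ‖Complex.exp L - 1‖ ≤ Real.exp ‖L‖ - 1 := hbase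
      _ ≤ (Real.exp 1 - 1) * ‖L‖ := aux_exp_convex (norm_nonneg L) hL1
      _ ≤ 7/4 * (c * ρ) := by
          apply mul_le_mul he hLle (norm_nonneg L)
          norm_num
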